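/- Let n ≥ d ≥ 1 and m₁, m₂ ∈ ℕ. Suppose f : M_n(ℂ) × M_{n,d}(ℂ) → ℂ is a polynomial function of the matrix entries (i.e. given by evaluation of a multivariate polynomial over ℂ in the n² + nd entries) such that for all h ∈ GL_n(ℂ), m ∈ GL_d(ℂ), all symmetric z ∈ M_n(ℂ) and all y ∈ M_{n,d}(ℂ): f(h·z·ᵗh, h·y·ᵗm) = (det h)^{2(m₁+m₂)}·(det m)^{2m₂}·f(z, y). Then there exists c ∈ ℂ such that for all symmetric z ∈ M_n(ℂ) and all y ∈ M_{n,d}(ℂ): f(z, y) = c·(det z)^{m₁}·((−1)^d·det([[z, y], [ᵗy, 0]]))^{m₂}. (For invertible z the latter equals c·(det z)^{m₁+m₂}·(det(ᵗy·z⁻¹·y))^{m₂}.) -/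

import Mathlib

open Matrix

/-- Every invertible symmetric complex matrix factors as `h * hᵀ` with `h` invertible. -/
lemma exists_mul_transpose_factor {k : ℕ} (s : Matrix (Fin k) (Fin k) ℂ)
    (hu : IsUnit s) (hs : s.IsSymm) :
    ∃ h : Matrix (Fin k) (Fin k) ℂ, IsUnit h ∧ s = h * hᵀ := by
  classical
  set B : (Fin k → ℂ) →ₗ[ℂ] (Fin k → ℂ) →ₗ[ℂ] ℂ := Matrix.toLinearMap₂' ℂ s with hB
  have hBsymm : B.IsSymm := by
    refine ⟨fun x y => ?_⟩
    simp only [hB, Matrix.toLinearMap₂'_apply, RingHom.id_apply]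
    rw [Finset.sum_comm]
    refine Finset.sum_congr rfl fun i _ => Finset.sum_congr rfl fun j _ => ?_
    have : s j i = s i j := by
      conv_lhs => rw [← hs]
      rfl
    rw [this, smul_comm]
  set Q : QuadraticForm ℂ (Fin k → ℂ) := LinearMap.BilinMap.toQuadraticMap B with hQdef
  have hassoc : QuadraticMap.associated (R := ℂ) Q = B :=
    QuadraticMap.associated_left_inverse ℂ hBsymm.eq
  have hdet : s.det ≠ 0 := by
    intro h0
    exact (h0 ▸ (Matrix.isUnit_iff_isUnit_det s).mp hu).ne_zero rfl
  have hsep : (QuadraticMap.associated (R := ℂ) Q).SeparatingLeft := by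
    rw [hassoc, hB]
    exact LinearMap.separatingLeft_toLinearMap₂'_of_det_ne_zero' hdet
  obtain ⟨e⟩ := Q.equivalent_sum_squares hsep
  set ι := Fin (Module.finrank ℂ (Fin k → ℂ))
  set W : QuadraticForm ℂ (ι → ℂ) := QuadraticMap.weightedSumSquares ℂ (1 : ι → ℂ) with hWdef
  have hcomp : Q = W.comp (e : (Fin k → ℂ) ≃ₗ[ℂ] (ι → ℂ)).toLinearMap := by
    ext x
    simp only [QuadraticMap.comp_apply, LinearEquiv.coe_coe]
    exact (e.map_app x).symm
  have hW1 : W = Matrix.toQuadraticForm' (1 : Matrix ι ι ℂ) := by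
    ext x
    simp only [hWdef, QuadraticMap.weightedSumSquares_apply, Matrix.toQuadraticForm',
      LinearMap.BilinMap.toQuadraticMap_apply, Matrix.toLinearMap₂'_apply, Matrix.one_apply]
    simp [mul_ite, ite_mul]
    refine Finset.sum_congr rfl fun i _ => ?_
    rw [Finset.sum_eq_single i (fun j _ hj => if_neg (Ne.symm hj))
      (fun h => absurd (Finset.mem_univ i) h), if_pos rfl]
  have hWB : ((Matrix.toLinearMap₂' ℂ (1 : Matrix ι ι ℂ)) :
      (ι → ℂ) →ₗ[ℂ] (ι → ℂ) →ₗ[ℂ] ℂ).IsSymm := by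
    refine ⟨fun x y => ?_⟩
    simp only [Matrix.toLinearMap₂'_apply, RingHom.id_apply, Matrix.one_apply]
    rw [Finset.sum_comm]
    refine Finset.sum_congr rfl fun i _ => Finset.sum_congr rfl fun j _ => ?_
    rw [smul_comm]
    by_cases hij : i = j
    · subst hij; rfl
    · rw [if_neg hij, if_neg (Ne.symm hij)]
  have hWmat : W.toMatrix' = (1 : Matrix ι ι ℂ) := by
    rw [QuadraticForm.toMatrix', hW1, Matrix.toQuadraticForm',
      QuadraticMap.associated_left_inverse ℂ hWB.eq, LinearMap.toMatrix'_toLinearMap₂']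
  have hQmat : Q.toMatrix' = s := by
    rw [QuadraticForm.toMatrix', hassoc, hB, LinearMap.toMatrix'_toLinearMap₂']
  set g : Matrix ι (Fin k) ℂ :=
    LinearMap.toMatrix' ((e : (Fin k → ℂ) ≃ₗ[ℂ] (ι → ℂ)).toLinearMap) with hg
  have hsmat : s = gᵀ * g := by
    have h1 := QuadraticForm.toMatrix'_comp W ((e : (Fin k → ℂ) ≃ₗ[ℂ] (ι → ℂ)).toLinearMap)
    rw [← hcomp, hQmat, hWmat] at h1
    rw [h1, ← hg, Matrix.mul_one]
  -- reindex
  set ee : ι ≃ Fin k := finCongr (Module.finrank_fin_fun ℂ) with hee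
  set g' : Matrix (Fin k) (Fin k) ℂ := g.submatrix ee.symm id with hg'
  have hsmat' : s = g'ᵀ * g' := by
    rw [hg', Matrix.transpose_submatrix]
    rw [show (gᵀ.submatrix id ⇑ee.symm) * (g.submatrix ⇑ee.symm id)
        = (gᵀ * g).submatrix id id from Matrix.submatrix_mul_equiv gᵀ g id ee.symm id]
    rw [Matrix.submatrix_id_id, hsmat]
  have hdetg : IsUnit g'.det := by
    have : s.det = g'.det * g'.det := by
      rw [hsmat', Matrix.det_mul, Matrix.det_transpose]
    rw [isUnit_iff_ne_zero]
    intro h0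
    exact hdet (by rw [this, h0, mul_zero])
  refine ⟨g'ᵀ, ?_, by rw [Matrix.transpose_transpose, hsmat']⟩
  rw [Matrix.isUnit_iff_isUnit_det, Matrix.det_transpose]
  exact hdetg


lemma exists_orthogonal_extension {n d : ℕ} (hdn : d ≤ n) (q : Matrix (Fin n) (Fin d) ℂ)
    (hq : qᵀ * q = 1) :
    ∃ O : Matrix (Fin n) (Fin n) ℂ, Oᵀ * O = 1 ∧
      ∀ i j, O i (Fin.castLE hdn j) = q i j := by
  classical
  set r := n - d with hr
  have hdr : d + r = n := by omega
  set er : Fin d ⊕ Fin r ≃ Fin n := finSumFinEquiv.trans (finCongr hdr) with her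
  -- q has linearly independent columns; complete it to an invertible matrix
  have hinj : Function.Injective q.mulVecLin := by
    intro c₁ c₂ hcc
    have h2 : qᵀ *ᵥ (q *ᵥ c₁) = qᵀ *ᵥ (q *ᵥ c₂) := by
      simpa [Matrix.mulVecLin_apply] using congrArg (qᵀ.mulVec) hcc
    simpa [Matrix.mulVec_mulVec, hq, Matrix.one_mulVec] using h2
  obtain ⟨Cc, hCc⟩ := Submodule.exists_isCompl (LinearMap.range q.mulVecLin)
  have hfrk : Module.finrank ℂ (Fin r → ℂ) = Module.finrank ℂ Cc := by
    have h1 := Submodule.finrank_add_eq_of_isCompl hCc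
    have h2 : Module.finrank ℂ (LinearMap.range q.mulVecLin) = d := by
      rw [LinearMap.finrank_range_of_inj hinj, Module.finrank_fin_fun]
    rw [h2, Module.finrank_fin_fun] at h1
    rw [Module.finrank_fin_fun]
    omega
  obtain ⟨eqv⟩ := FiniteDimensional.nonempty_linearEquiv_of_finrank_eq hfrk
  set L' : (Fin r → ℂ) →ₗ[ℂ] (Fin n → ℂ) := Cc.subtype ∘ₗ eqv.toLinearMap with hL'
  set q' : Matrix (Fin n) (Fin r) ℂ := LinearMap.toMatrix' L' with hq'
  set M₀ : Matrix (Fin n) (Fin d ⊕ Fin r) ℂ := fromCols q q' with hM₀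
  set M : Matrix (Fin n) (Fin n) ℂ := M₀.submatrix id ⇑er.symm with hM
  have hMsurj : Function.Surjective M.mulVec := by
    intro u
    have hu' : u ∈ (LinearMap.range q.mulVecLin) ⊔ Cc := by
      rw [hCc.sup_eq_top]; trivial
    obtain ⟨a, ha, b, hb, hab⟩ := Submodule.mem_sup.mp hu'
    obtain ⟨ca, hca⟩ := ha
    refine ⟨Sum.elim ca (eqv.symm ⟨b, hb⟩) ∘ ⇑er.symm, ?_⟩
    rw [hM, Matrix.submatrix_mulVec_equiv]
    have hcomp : (Sum.elim ca (eqv.symm ⟨b, hb⟩) ∘ ⇑er.symm) ∘ ⇑er.symm.symm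
        = Sum.elim ca (eqv.symm ⟨b, hb⟩) := by
      ext x; simp
    rw [hcomp, hM₀, Matrix.fromCols_mulVec_sumElim]
    have h1 : q *ᵥ ca = a := by rw [← Matrix.mulVecLin_apply]; exact hca
    have h2 : q' *ᵥ (eqv.symm ⟨b, hb⟩) = b := by
      rw [hq']
      have : LinearMap.toMatrix' L' *ᵥ (eqv.symm ⟨b, hb⟩)
          = Matrix.toLin' (LinearMap.toMatrix' L') (eqv.symm ⟨b, hb⟩) := rfl
      rw [this, Matrix.toLin'_toMatrix', hL']
      simp
    funext i
    simp [h1, h2, hab]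
  have hMunit : IsUnit M := Matrix.mulVec_surjective_iff_isUnit.mp hMsurj
  have hN₀ : IsUnit (M₀ᵀ * M₀) := by
    have hdet : (M₀ᵀ * M₀).det = (Mᵀ * M).det := by
      rw [hM]
      rw [show (M₀.submatrix id ⇑er.symm)ᵀ = M₀ᵀ.submatrix ⇑er.symm id from rfl]
      rw [show M₀ᵀ.submatrix ⇑er.symm id * M₀.submatrix id ⇑er.symm
          = (M₀ᵀ * M₀).submatrix ⇑er.symm ⇑er.symm from ?_]
      · rw [Matrix.det_submatrix_equiv_self]
      · have := Matrix.submatrix_mul_equiv M₀ᵀ M₀ ⇑er.symm (Equiv.refl (Fin n)) ⇑er.symm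
        simpa using this
    rw [Matrix.isUnit_iff_isUnit_det, hdet, Matrix.det_mul, Matrix.det_transpose]
    exact ((Matrix.isUnit_iff_isUnit_det M).mp hMunit).mul
      ((Matrix.isUnit_iff_isUnit_det M).mp hMunit)
  -- orthogonalize the completion
  set q'' : Matrix (Fin n) (Fin r) ℂ := q' - q * (qᵀ * q') with hq''
  have hqq'' : qᵀ * q'' = 0 := by
    rw [hq'', Matrix.mul_sub, ← Matrix.mul_assoc, hq, Matrix.one_mul, sub_self]
  have hq''q : q''ᵀ * q = 0 := by
    have := congrArg Matrix.transpose hqq''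
    rwa [Matrix.transpose_mul, Matrix.transpose_transpose, Matrix.transpose_zero] at this
  have hfc : fromCols q q'' = M₀ * (fromBlocks 1 (-(qᵀ * q')) 0 1 :
      Matrix (Fin d ⊕ Fin r) (Fin d ⊕ Fin r) ℂ) := by
    rw [hM₀, Matrix.fromCols_mul_fromBlocks, Matrix.mul_one, Matrix.mul_zero, add_zero,
      Matrix.mul_one, Matrix.mul_neg, hq'', sub_eq_neg_add]
  set s : Matrix (Fin r) (Fin r) ℂ := q''ᵀ * q'' with hsdef
  have hGb : (fromCols q q'')ᵀ * fromCols q q'' = fromBlocks 1 (qᵀ * q'') (q''ᵀ * q) s := by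
    rw [Matrix.transpose_fromCols, Matrix.fromRows_mul_fromCols, hq]
  have hGU : IsUnit ((fromCols q q'')ᵀ * fromCols q q'') := by
    rw [hfc, Matrix.transpose_mul]
    have hB : IsUnit (fromBlocks (1 : Matrix (Fin d) (Fin d) ℂ) (-(qᵀ * q')) 0
        (1 : Matrix (Fin r) (Fin r) ℂ)) := by
      rw [Matrix.isUnit_iff_isUnit_det, Matrix.det_fromBlocks_zero₂₁]
      simp
    have hassoc : (fromBlocks (1 : Matrix (Fin d) (Fin d) ℂ) (-(qᵀ * q')) 0
          (1 : Matrix (Fin r) (Fin r) ℂ))ᵀ * M₀ᵀ * (M₀ * (fromBlocks 1 (-(qᵀ * q')) 0 1 : Matrix (Fin d ⊕ Fin r) (Fin d ⊕ Fin r) ℂ))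
        = (fromBlocks 1 (-(qᵀ * q')) 0 1 : Matrix (Fin d ⊕ Fin r) (Fin d ⊕ Fin r) ℂ)ᵀ * (M₀ᵀ * M₀) * (fromBlocks 1 (-(qᵀ * q')) 0 1 : Matrix (Fin d ⊕ Fin r) (Fin d ⊕ Fin r) ℂ) := by
      simp only [Matrix.mul_assoc]
    rw [hassoc]
    exact (((Matrix.isUnit_transpose _).mpr hB).mul hN₀).mul hB
  have hsU : IsUnit s := by
    rw [hGb, hqq'', hq''q] at hGU
    rw [Matrix.isUnit_iff_isUnit_det, Matrix.det_fromBlocks_zero₂₁, Matrix.det_one, one_mul]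
      at hGU
    rwa [Matrix.isUnit_iff_isUnit_det]
  have hssym : s.IsSymm := by
    rw [Matrix.IsSymm, hsdef, Matrix.transpose_mul, Matrix.transpose_transpose]
  obtain ⟨h, hhU, hhs⟩ := exists_mul_transpose_factor s hsU hssym
  have hhdet : IsUnit h.det := (Matrix.isUnit_iff_isUnit_det h).mp hhU
  set w : Matrix (Fin n) (Fin r) ℂ := q'' * (hᵀ)⁻¹ with hw
  have hqw : qᵀ * w = 0 := by rw [hw, ← Matrix.mul_assoc, hqq'', Matrix.zero_mul]
  have hwq : wᵀ * q = 0 := by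
    have := congrArg Matrix.transpose hqw
    rwa [Matrix.transpose_mul, Matrix.transpose_transpose, Matrix.transpose_zero] at this
  have hww : wᵀ * w = 1 := by
    rw [hw, Matrix.transpose_mul, Matrix.transpose_nonsing_inv, Matrix.transpose_transpose]
    calc h⁻¹ * q''ᵀ * (q'' * hᵀ⁻¹) = h⁻¹ * (q''ᵀ * q'') * hᵀ⁻¹ := by
          simp only [Matrix.mul_assoc]
    _ = h⁻¹ * (h * hᵀ) * hᵀ⁻¹ := by rw [← hsdef, hhs]
    _ = (h⁻¹ * h) * (hᵀ * hᵀ⁻¹) := by simp only [Matrix.mul_assoc]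
    _ = 1 := by
        rw [Matrix.nonsing_inv_mul h hhdet, Matrix.mul_nonsing_inv hᵀ (by
          rwa [Matrix.det_transpose]), Matrix.one_mul]
  set O : Matrix (Fin n) (Fin n) ℂ := (fromCols q w).submatrix id ⇑er.symm with hO
  refine ⟨O, ?_, ?_⟩
  · rw [hO]
    rw [show ((fromCols q w).submatrix id ⇑er.symm)ᵀ
        = (fromCols q w)ᵀ.submatrix ⇑er.symm id from rfl]
    rw [show (fromCols q w)ᵀ.submatrix ⇑er.symm id * (fromCols q w).submatrix id ⇑er.symm
        = ((fromCols q w)ᵀ * fromCols q w).submatrix ⇑er.symm ⇑er.symm from ?_]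
    · rw [Matrix.transpose_fromCols, Matrix.fromRows_mul_fromCols, hq, hqw, hwq, hww,
        Matrix.fromBlocks_one, Matrix.submatrix_one_equiv]
    · have := Matrix.submatrix_mul_equiv (fromCols q w)ᵀ (fromCols q w)
        ⇑er.symm (Equiv.refl (Fin n)) ⇑er.symm
      simpa using this
  · intro i j
    have hkey : er.symm (Fin.castLE hdn j) = Sum.inl j := by
      rw [Equiv.symm_apply_eq]
      ext
      simp [her]
    rw [hO, Matrix.submatrix_apply, hkey, id_eq, Matrix.fromCols_apply_inl]

theorem stmt13 (n d m₁ m₂ : ℕ) (hd : 1 ≤ d) (hdn : d ≤ n)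
    (f : Matrix (Fin n) (Fin n) ℂ → Matrix (Fin n) (Fin d) ℂ → ℂ)
    (hpoly : ∃ P : MvPolynomial ((Fin n × Fin n) ⊕ (Fin n × Fin d)) ℂ,
      ∀ (z : Matrix (Fin n) (Fin n) ℂ) (y : Matrix (Fin n) (Fin d) ℂ),
        f z y = MvPolynomial.eval
          (Sum.elim (fun p => z p.1 p.2) (fun p => y p.1 p.2)) P)
    (hrel : ∀ (h : Matrix (Fin n) (Fin n) ℂ) (m : Matrix (Fin d) (Fin d) ℂ)
        (z : Matrix (Fin n) (Fin n) ℂ) (y : Matrix (Fin n) (Fin d) ℂ),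
        IsUnit h → IsUnit m → z.IsSymm →
        f (h * z * hᵀ) (h * y * mᵀ) =
          h.det ^ (2 * (m₁ + m₂)) * m.det ^ (2 * m₂) * f z y) :
    ∃ c : ℂ, ∀ (z : Matrix (Fin n) (Fin n) ℂ) (y : Matrix (Fin n) (Fin d) ℂ),
      z.IsSymm →
      f z y = c * z.det ^ m₁ *
        ((-1) ^ d * (Matrix.fromBlocks z y yᵀ (0 : Matrix (Fin d) (Fin d) ℂ)).det) ^ m₂ := by
  classical
  obtain ⟨P, hP⟩ := hpoly
  -- the base point `E` (first d columns of the identity)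
  set E : Matrix (Fin n) (Fin d) ℂ :=
    Matrix.of (fun i j => if (i : ℕ) = (j : ℕ) then 1 else 0) with hEdef
  have hEentry : ∀ (i : Fin n) (j : Fin d), E i j = if i = Fin.castLE hdn j then 1 else 0 := by
    intro i j
    simp only [hEdef, Matrix.of_apply]
    congr 1
    simp [Fin.ext_iff]
  have hEcol : ∀ (A : Matrix (Fin n) (Fin n) ℂ) (i : Fin n) (j : Fin d),
      (A * E) i j = A i (Fin.castLE hdn j) := by
    intro A i j
    rw [Matrix.mul_apply, Finset.sum_eq_single (Fin.castLE hdn j)]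
    · rw [hEentry, if_pos rfl, mul_one]
    · intro b _ hb
      rw [hEentry, if_neg hb, mul_zero]
    · intro hmem; exact absurd (Finset.mem_univ _) hmem
  have hEE : Eᵀ * E = (1 : Matrix (Fin d) (Fin d) ℂ) := by
    ext i j
    rw [Matrix.mul_apply, Finset.sum_eq_single (Fin.castLE hdn i)]
    · rw [Matrix.transpose_apply, hEentry, if_pos rfl, one_mul, hEentry, Matrix.one_apply]
      congr 1
      simp [Fin.ext_iff]
    · intro b _ hb
      rw [Matrix.transpose_apply, hEentry, if_neg hb, zero_mul]
    · intro hmem; exact absurd (Finset.mem_univ _) hmem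
  set c : ℂ := f 1 E with hc
  -- the key orbit computation
  have key : ∀ (z : Matrix (Fin n) (Fin n) ℂ) (y : Matrix (Fin n) (Fin d) ℂ),
      z.IsSymm → IsUnit z → IsUnit (yᵀ * z⁻¹ * y) →
      f z y = c * z.det ^ m₁ *
        ((-1) ^ d * (Matrix.fromBlocks z y yᵀ (0 : Matrix (Fin d) (Fin d) ℂ)).det) ^ m₂ := by
    intro z y hzsym hzU hwU
    obtain ⟨h, hhU, hz⟩ := exists_mul_transpose_factor z hzU hzsym
    have hhdet : IsUnit h.det := (Matrix.isUnit_iff_isUnit_det h).mp hhU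
    have hzinvsym : (z⁻¹)ᵀ = z⁻¹ := by
      rw [Matrix.transpose_nonsing_inv, hzsym]
    have hwsym : (yᵀ * z⁻¹ * y).IsSymm := by
      rw [Matrix.IsSymm, Matrix.transpose_mul, Matrix.transpose_mul, Matrix.transpose_transpose,
        hzinvsym, Matrix.mul_assoc]
    obtain ⟨m, hmU, hw⟩ := exists_mul_transpose_factor (yᵀ * z⁻¹ * y) hwU hwsym
    have hmdet : IsUnit m.det := (Matrix.isUnit_iff_isUnit_det m).mp hmU
    have hmtdet : IsUnit mᵀ.det := by rwa [Matrix.det_transpose]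
    set q : Matrix (Fin n) (Fin d) ℂ := h⁻¹ * y * (mᵀ)⁻¹ with hqdef
    have hzinv : z⁻¹ = (hᵀ)⁻¹ * h⁻¹ := by rw [hz, Matrix.mul_inv_rev]
    have hqq : qᵀ * q = 1 := by
      have step : qᵀ * q = m⁻¹ * (yᵀ * z⁻¹ * y) * (mᵀ)⁻¹ := by
        rw [hqdef, hzinv]
        simp only [Matrix.transpose_mul, Matrix.transpose_nonsing_inv,
          Matrix.transpose_transpose, Matrix.mul_assoc]
      rw [step, hw, ← Matrix.mul_assoc, Matrix.nonsing_inv_mul m hmdet, Matrix.one_mul,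
        Matrix.mul_nonsing_inv mᵀ hmtdet]
    obtain ⟨O, hOO, hOcol⟩ := exists_orthogonal_extension hdn q hqq
    have hOdet : IsUnit O.det := by
      have h1 : O.det * O.det = 1 := by
        have := congrArg Matrix.det hOO
        rwa [Matrix.det_mul, Matrix.det_transpose, Matrix.det_one] at this
      exact IsUnit.of_mul_eq_one _ h1
    have hOU : IsUnit O := (Matrix.isUnit_iff_isUnit_det O).mpr hOdet
    have hOinv : O⁻¹ = Oᵀ := Matrix.inv_eq_left_inv hOO
    have hOOT : O * Oᵀ = 1 := by rw [← hOinv, Matrix.mul_nonsing_inv O hOdet]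
    have hOE : O * E = q := by
      ext i j
      rw [hEcol]
      exact hOcol i j
    set h' : Matrix (Fin n) (Fin n) ℂ := h * O with hh'def
    have hh'U : IsUnit h' := hhU.mul hOU
    have hh'det : IsUnit h'.det := (Matrix.isUnit_iff_isUnit_det h').mp hh'U
    have hz' : h' * 1 * h'ᵀ = z := by
      calc h' * 1 * h'ᵀ = h * ((O * Oᵀ) * hᵀ) := by
            rw [Matrix.mul_one, hh'def, Matrix.transpose_mul]
            simp only [Matrix.mul_assoc]
      _ = z := by rw [hOOT, Matrix.one_mul, ← hz]
    have hy' : h' * E * mᵀ = y := by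
      calc h' * E * mᵀ = h * (O * E) * mᵀ := by simp only [hh'def, Matrix.mul_assoc]
      _ = h * (h⁻¹ * y * (mᵀ)⁻¹) * mᵀ := by rw [hOE, hqdef]
      _ = y := by
          calc h * (h⁻¹ * y * (mᵀ)⁻¹) * mᵀ
              = (h * h⁻¹) * (y * ((mᵀ)⁻¹ * mᵀ)) := by simp only [Matrix.mul_assoc]
          _ = y := by
              rw [Matrix.mul_nonsing_inv h hhdet, Matrix.nonsing_inv_mul mᵀ hmtdet,
                Matrix.mul_one, Matrix.one_mul]
    have hfval : f z y = h'.det ^ (2 * (m₁ + m₂)) * m.det ^ (2 * m₂) * c := by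
      have := hrel h' m 1 E hh'U hmU Matrix.isSymm_one
      rw [hz', hy'] at this
      rw [this, hc]
    -- now compute the right-hand side
    have hdetz : z.det = h'.det * h'.det := by
      rw [← hz', Matrix.mul_one, Matrix.det_mul, Matrix.det_transpose]
    have hblock : fromBlocks z y yᵀ (0 : Matrix (Fin d) (Fin d) ℂ)
        = fromBlocks h' 0 0 m * fromBlocks 1 E Eᵀ 0 * fromBlocks h'ᵀ 0 0 mᵀ := by
      rw [Matrix.fromBlocks_multiply, Matrix.fromBlocks_multiply, ← hz', ← hy']
      simp only [Matrix.mul_zero, Matrix.zero_mul, Matrix.mul_one, Matrix.one_mul, add_zero,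
        zero_add, Matrix.transpose_mul, Matrix.transpose_transpose, Matrix.mul_assoc]
    have hF₀ : (fromBlocks (1 : Matrix (Fin n) (Fin n) ℂ) E Eᵀ
        (0 : Matrix (Fin d) (Fin d) ℂ)).det = (-1 : ℂ) ^ d := by
      haveI : Invertible (1 : Matrix (Fin n) (Fin n) ℂ) := invertibleOne
      rw [Matrix.det_fromBlocks₁₁]
      rw [Matrix.det_one, one_mul, invOf_one, Matrix.mul_one, hEE, zero_sub, Matrix.det_neg,
        Matrix.det_one, Fintype.card_fin, mul_one]
    have hF : (fromBlocks z y yᵀ (0 : Matrix (Fin d) (Fin d) ℂ)).det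
        = (h'.det * m.det) * (-1 : ℂ) ^ d * (h'.det * m.det) := by
      rw [hblock, Matrix.det_mul, Matrix.det_mul, Matrix.det_fromBlocks_zero₂₁,
        Matrix.det_fromBlocks_zero₂₁, hF₀, Matrix.det_transpose, Matrix.det_transpose]
    rw [hfval, hdetz, hF]
    have hsign : ((-1 : ℂ) ^ d) * ((-1 : ℂ) ^ d) = 1 := by
      rw [← mul_pow]; norm_num
    have hbase : (-1 : ℂ) ^ d * ((h'.det * m.det) * (-1 : ℂ) ^ d * (h'.det * m.det))
        = (h'.det * m.det) * (h'.det * m.det) := by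
      calc (-1 : ℂ) ^ d * ((h'.det * m.det) * (-1 : ℂ) ^ d * (h'.det * m.det))
          = ((-1 : ℂ) ^ d * (-1 : ℂ) ^ d) * ((h'.det * m.det) * (h'.det * m.det)) := by ring
      _ = (h'.det * m.det) * (h'.det * m.det) := by rw [hsign, one_mul]
    rw [hbase]
    ring
  -- polynomial density argument
  refine ⟨c, ?_⟩
  set zmat : ((Fin n × Fin n) ⊕ (Fin n × Fin d) → ℂ) → Matrix (Fin n) (Fin n) ℂ :=
    fun x => Matrix.of fun i j => x (Sum.inl (i, j)) + x (Sum.inl (j, i)) with hzmat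
  set ymat : ((Fin n × Fin n) ⊕ (Fin n × Fin d) → ℂ) → Matrix (Fin n) (Fin d) ℂ :=
    fun x => Matrix.of fun i j => x (Sum.inr (i, j)) with hymat
  set ZA : Matrix (Fin n) (Fin n) (MvPolynomial ((Fin n × Fin n) ⊕ (Fin n × Fin d)) ℂ) :=
    Matrix.of fun i j => MvPolynomial.X (Sum.inl (i, j)) + MvPolynomial.X (Sum.inl (j, i))
    with hZA
  set YY : Matrix (Fin n) (Fin d) (MvPolynomial ((Fin n × Fin n) ⊕ (Fin n × Fin d)) ℂ) :=
    Matrix.of fun i j => MvPolynomial.X (Sum.inr (i, j)) with hYY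
  set g : (Fin n × Fin n) ⊕ (Fin n × Fin d) →
      MvPolynomial ((Fin n × Fin n) ⊕ (Fin n × Fin d)) ℂ :=
    Sum.elim (fun p => MvPolynomial.X (Sum.inl p) + MvPolynomial.X (Sum.inl (p.2, p.1)))
      (fun p => MvPolynomial.X (Sum.inr p)) with hg
  set Pf : MvPolynomial ((Fin n × Fin n) ⊕ (Fin n × Fin d)) ℂ :=
    MvPolynomial.bind₁ g P with hPfdef
  set Pg : MvPolynomial ((Fin n × Fin n) ⊕ (Fin n × Fin d)) ℂ :=
    MvPolynomial.C c * ZA.det ^ m₁ *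
      (MvPolynomial.C ((-1 : ℂ) ^ d) * (fromBlocks ZA YY YYᵀ 0).det) ^ m₂ with hPgdef
  set P₁ : MvPolynomial ((Fin n × Fin n) ⊕ (Fin n × Fin d)) ℂ := ZA.det with hP₁def
  set P₂ : MvPolynomial ((Fin n × Fin n) ⊕ (Fin n × Fin d)) ℂ :=
    (YYᵀ * ZA.adjugate * YY).det with hP₂def
  have hmapZ : ∀ x, ZA.map (MvPolynomial.eval x) = zmat x := by
    intro x; ext i j; simp [hZA, hzmat]
  have hmapY : ∀ x, YY.map (MvPolynomial.eval x) = ymat x := by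
    intro x; ext i j; simp [hYY, hymat]
  have hzsymm : ∀ x, (zmat x).IsSymm := by
    intro x
    ext i j
    simp only [hzmat, Matrix.transpose_apply, Matrix.of_apply]
    ring
  have hevalPf : ∀ x, MvPolynomial.eval x Pf = f (zmat x) (ymat x) := by
    intro x
    rw [hP]
    show MvPolynomial.eval₂Hom (RingHom.id ℂ) x (MvPolynomial.bind₁ g P) = _
    rw [MvPolynomial.eval₂Hom_bind₁]
    have harg : (fun i => MvPolynomial.eval₂Hom (RingHom.id ℂ) x (g i))
        = Sum.elim (fun p => zmat x p.1 p.2) (fun p => ymat x p.1 p.2) := by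
      funext s
      cases s with
      | inl p => simp [hg, hzmat]
      | inr p => simp [hg, hymat]
    rw [harg]
    rfl
  have hevalP₁ : ∀ x, MvPolynomial.eval x P₁ = (zmat x).det := by
    intro x
    rw [hP₁def, RingHom.map_det, RingHom.mapMatrix_apply, hmapZ]
  have hblockmap : ∀ x, (fromBlocks ZA YY YYᵀ 0).map (MvPolynomial.eval x)
      = fromBlocks (zmat x) (ymat x) (ymat x)ᵀ 0 := by
    intro x
    rw [Matrix.fromBlocks_map, hmapZ, hmapY, Matrix.transpose_map, hmapY]
    congr 1
  have hevalPg : ∀ x, MvPolynomial.eval x Pg = c * (zmat x).det ^ m₁ *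
      ((-1 : ℂ) ^ d * (fromBlocks (zmat x) (ymat x) (ymat x)ᵀ 0).det) ^ m₂ := by
    intro x
    rw [hPgdef, _root_.map_mul, _root_.map_mul, map_pow, map_pow, _root_.map_mul,
      MvPolynomial.eval_C, MvPolynomial.eval_C, RingHom.map_det, RingHom.map_det,
      RingHom.mapMatrix_apply, RingHom.mapMatrix_apply, hmapZ, hblockmap]
  have hadjmap : ∀ x, (ZA.adjugate).map (MvPolynomial.eval x) = (zmat x).adjugate := by
    intro x
    have := RingHom.map_adjugate (MvPolynomial.eval x) ZA
    rw [RingHom.mapMatrix_apply, RingHom.mapMatrix_apply, hmapZ] at this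
    exact this
  have hevalP₂ : ∀ x, MvPolynomial.eval x P₂
      = ((ymat x)ᵀ * (zmat x).adjugate * (ymat x)).det := by
    intro x
    rw [hP₂def, RingHom.map_det, RingHom.mapMatrix_apply, Matrix.map_mul, Matrix.map_mul,
      Matrix.transpose_map, hmapY, hadjmap]
  have hprod : (Pf - Pg) * (P₁ * P₂) = 0 := by
    apply MvPolynomial.funext
    intro x
    rw [map_zero, _root_.map_mul, _root_.map_mul, map_sub]
    by_cases h1 : (zmat x).det = 0
    · rw [hevalP₁ x, h1]
      ring
    · by_cases h2 : ((ymat x)ᵀ * (zmat x).adjugate * (ymat x)).det = 0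
      · rw [hevalP₂ x, h2]
        ring
      · have hzU : IsUnit (zmat x) :=
          (Matrix.isUnit_iff_isUnit_det _).mpr (isUnit_iff_ne_zero.mpr h1)
        have hy : (ymat x)ᵀ * (zmat x)⁻¹ * (ymat x)
            = Ring.inverse (zmat x).det • ((ymat x)ᵀ * (zmat x).adjugate * (ymat x)) := by
          rw [Matrix.inv_def, Matrix.mul_smul, Matrix.smul_mul]
        have hwU : IsUnit ((ymat x)ᵀ * (zmat x)⁻¹ * (ymat x)) := by
          rw [Matrix.isUnit_iff_isUnit_det, hy, Matrix.det_smul, isUnit_iff_ne_zero]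
          apply mul_ne_zero
          · apply pow_ne_zero
            rw [Ring.inverse_eq_inv]
            exact inv_ne_zero h1
          · exact h2
        have hk := key (zmat x) (ymat x) (hzsymm x) hzU hwU
        rw [hevalPf, hevalPg, hk, sub_self, zero_mul]
  -- a point where P₁ and P₂ do not vanish
  set x₀ : (Fin n × Fin n) ⊕ (Fin n × Fin d) → ℂ :=
    Sum.elim (fun p => if p.1 = p.2 then (2⁻¹ : ℂ) else 0)
      (fun p => if (p.1 : ℕ) = (p.2 : ℕ) then 1 else 0) with hx₀
  have hz₀ : zmat x₀ = 1 := by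
    ext i j
    by_cases hij : i = j
    · subst hij
      simp [hzmat, hx₀, Matrix.one_apply]
      norm_num
    · simp [hzmat, hx₀, Matrix.one_apply, hij, Ne.symm hij]
  have hy₀ : ymat x₀ = E := by
    ext i j
    simp [hymat, hx₀, hEdef]
  have hP₁ne : P₁ ≠ 0 := by
    intro h0
    have := hevalP₁ x₀
    rw [h0, map_zero, hz₀, Matrix.det_one] at this
    exact zero_ne_one this
  have hP₂ne : P₂ ≠ 0 := by
    intro h0
    have := hevalP₂ x₀
    rw [h0, map_zero, hz₀, hy₀, Matrix.adjugate_one, Matrix.mul_one, hEE,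
      Matrix.det_one] at this
    exact zero_ne_one this
  have hD : Pf = Pg := by
    rcases mul_eq_zero.mp hprod with h | h
    · exact sub_eq_zero.mp h
    · rcases mul_eq_zero.mp h with h' | h'
      · exact absurd h' hP₁ne
      · exact absurd h' hP₂ne
  -- conclude
  intro z y hsym
  set x : (Fin n × Fin n) ⊕ (Fin n × Fin d) → ℂ :=
    Sum.elim (fun p => 2⁻¹ * z p.1 p.2) (fun p => y p.1 p.2) with hx
  have hzx : zmat x = z := by
    ext i j
    simp only [hzmat, hx, Matrix.of_apply, Sum.elim_inl]
    rw [hsym.apply i j]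
    ring
  have hyx : ymat x = y := by
    ext i j
    simp [hymat, hx]
  have := congrArg (MvPolynomial.eval x) hD
  rw [hevalPf, hevalPg, hzx, hyx] at this
  rw [this]
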